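/- arXiv:1709.09459 — 2 statements merged into one kernel-verified Lean document; each statement's English description precedes it below -/
import Mathlib

section
/- Let A ≤ B be irreducible nonnegative matrices on countable S, A ≠ B, with ρ(B) < ∞. If ρ(B) = ρ(A), then A is R-transient, i.e., Σ_{n≥1} ρ(A)^{-n} A^n(x,x) < ∞ for all x ∈ S. -/
set_option maxHeartbeats 1000000

open scoped ENNReal
open Filter

variable {S : Type*}

/-- Matrix powers of a nonnegative (possibly infinite-sum) matrix on a countable set. -/
noncomputable def matPow [DecidableEq S] (A : S → S → ℝ≥0∞) : ℕ → S → S → ℝ≥0∞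
  | 0 => fun x y => if x = y then 1 else 0
  | n + 1 => fun x y => ∑' z, matPow A n x z * A z y

section Aux

variable [Countable S] [DecidableEq S]

lemma matPow_zero (M : S → S → ℝ≥0∞) (x y : S) :
    matPow M 0 x y = if x = y then 1 else 0 := rfl

lemma matPow_succ (M : S → S → ℝ≥0∞) (n : ℕ) (x y : S) :
    matPow M (n + 1) x y = ∑' z, matPow M n x z * M z y := rfl

lemma matPow_one (M : S → S → ℝ≥0∞) (x y : S) : matPow M 1 x y = M x y := by
  rw [matPow_succ, tsum_eq_single x]
  · simp [matPow_zero]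
  · intro z hz
    rw [matPow_zero, if_neg (fun h => hz h.symm), zero_mul]

lemma matPow_add (M : S → S → ℝ≥0∞) (a b : ℕ) (x y : S) :
    matPow M (a + b) x y = ∑' z, matPow M a x z * matPow M b z y := by
  induction b generalizing y with
  | zero =>
    rw [Nat.add_zero, tsum_eq_single y]
    · simp [matPow_zero]
    · intro z hz
      rw [matPow_zero, if_neg hz, mul_zero]
  | succ b ih =>
    rw [show a + (b + 1) = (a + b) + 1 from rfl, matPow_succ]
    calc ∑' w, matPow M (a + b) x w * M w y
        = ∑' w, (∑' z, matPow M a x z * matPow M b z w) * M w y :=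
          tsum_congr fun w => by rw [ih]
      _ = ∑' w, ∑' z, matPow M a x z * matPow M b z w * M w y :=
          tsum_congr fun w => ENNReal.tsum_mul_right.symm
      _ = ∑' z, ∑' w, matPow M a x z * (matPow M b z w * M w y) := by
          rw [ENNReal.tsum_comm]
          exact tsum_congr fun z => tsum_congr fun w => mul_assoc _ _ _
      _ = ∑' z, matPow M a x z * matPow M (b + 1) z y := by
          exact tsum_congr fun z => by rw [ENNReal.tsum_mul_left, matPow_succ]

lemma mul_matPow_le (M : S → S → ℝ≥0∞) (a b : ℕ) (x z y : S) :
    matPow M a x z * matPow M b z y ≤ matPow M (a + b) x y := by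
  rw [matPow_add]; exact ENNReal.le_tsum z

lemma matPow_mono {M M' : S → S → ℝ≥0∞} (h : ∀ a b, M a b ≤ M' a b) (n : ℕ) (x y : S) :
    matPow M n x y ≤ matPow M' n x y := by
  induction n generalizing y with
  | zero => exact le_of_eq rfl
  | succ n ih => exact ENNReal.tsum_le_tsum fun z => mul_le_mul' (ih z) (h z y)

/-- The matrix `M` with all transitions *into* `x` removed. -/
noncomputable def Qm [DecidableEq S] (M : S → S → ℝ≥0∞) (x : S) : S → S → ℝ≥0∞ :=
  fun z y => if y = x then 0 else M z y

lemma Qm_le (M : S → S → ℝ≥0∞) (x : S) : ∀ z y, Qm M x z y ≤ M z y := by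
  intro z y; unfold Qm; split <;> simp

lemma Qm_mono {M M' : S → S → ℝ≥0∞} (h : ∀ a b, M a b ≤ M' a b) (x : S) :
    ∀ z y, Qm M x z y ≤ Qm M' x z y := by
  intro z y; unfold Qm; split
  · exact le_rfl
  · exact h z y

lemma matPow_Qm_succ_x (M : S → S → ℝ≥0∞) (x s : S) (n : ℕ) :
    matPow (Qm M x) (n + 1) s x = 0 := by
  rw [matPow_succ, ENNReal.tsum_eq_zero]
  intro z
  simp [Qm]

/-- Last-visit decomposition: paths from `x` split at the last visit to `x`. -/
lemma matPow_eq_sum_loop_mul (M : S → S → ℝ≥0∞) (x : S) :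
    ∀ n, ∀ z, matPow M n x z =
      ∑ k ∈ Finset.range (n + 1), matPow M k x x * matPow (Qm M x) (n - k) x z := by
  intro n
  induction n with
  | zero =>
    intro z
    simp [matPow_zero]
  | succ n ih =>
    intro z
    by_cases hz : z = x
    · rw [hz]
      rw [Finset.sum_range_succ]
      have h1 : ∑ k ∈ Finset.range (n + 1),
          matPow M k x x * matPow (Qm M x) (n + 1 - k) x x = 0 := by
        apply Finset.sum_eq_zero
        intro k hk
        have hk' : k ≤ n := by simpa [Nat.lt_succ] using hk
        rw [show n + 1 - k = (n - k) + 1 by omega, matPow_Qm_succ_x, mul_zero]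
      rw [h1, zero_add, Nat.sub_self, matPow_zero, if_pos rfl, mul_one]
    · calc matPow M (n + 1) x z
          = ∑' w, matPow M n x w * Qm M x w z := by
            rw [matPow_succ]
            exact tsum_congr fun w => by rw [Qm, if_neg hz]
        _ = ∑' w, ∑ k ∈ Finset.range (n + 1),
              matPow M k x x * matPow (Qm M x) (n - k) x w * Qm M x w z := by
            refine tsum_congr fun w => ?_
            rw [ih w, Finset.sum_mul]
        _ = ∑ k ∈ Finset.range (n + 1),
              ∑' w, matPow M k x x * matPow (Qm M x) (n - k) x w * Qm M x w z :=
            Summable.tsum_finsetSum fun _ _ => ENNReal.summable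
        _ = ∑ k ∈ Finset.range (n + 1),
              matPow M k x x * matPow (Qm M x) (n - k + 1) x z := by
            refine Finset.sum_congr rfl fun k hk => ?_
            rw [matPow_succ, ← ENNReal.tsum_mul_left]
            exact tsum_congr fun w => (mul_assoc _ _ _)
        _ = ∑ k ∈ Finset.range (n + 1 + 1),
              matPow M k x x * matPow (Qm M x) (n + 1 - k) x z := by
            rw [Finset.sum_range_succ (n := n + 1), Nat.sub_self, matPow_zero,
              if_neg (fun h => hz h.symm), mul_zero, add_zero]
            refine Finset.sum_congr rfl fun k hk => ?_
            have hk' : k ≤ n := by simpa [Nat.lt_succ] using hk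
            rw [show n + 1 - k = n - k + 1 by omega]

/-- First-return weights: `fr M x n` is the total weight of paths of length `n+1` from `x`
back to `x` that avoid `x` strictly in between. -/
noncomputable def fr [DecidableEq S] (M : S → S → ℝ≥0∞) (x : S) (n : ℕ) : ℝ≥0∞ :=
  ∑' w, matPow (Qm M x) n x w * M w x

lemma fr_mono {M M' : S → S → ℝ≥0∞} (h : ∀ a b, M a b ≤ M' a b) (x : S) (n : ℕ) :
    fr M x n ≤ fr M' x n :=
  ENNReal.tsum_le_tsum fun w =>
    mul_le_mul' (matPow_mono (Qm_mono h x) n x w) (h w x)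

/-- Renewal identity at the level of coefficients. -/
lemma matPow_diag_renewal (M : S → S → ℝ≥0∞) (x : S) (n : ℕ) :
    matPow M (n + 1) x x
      = ∑ k ∈ Finset.range (n + 1), matPow M k x x * fr M x (n - k) := by
  rw [matPow_succ]
  calc ∑' w, matPow M n x w * M w x
      = ∑' w, ∑ k ∈ Finset.range (n + 1),
          matPow M k x x * matPow (Qm M x) (n - k) x w * M w x := by
        refine tsum_congr fun w => ?_
        rw [matPow_eq_sum_loop_mul M x n w, Finset.sum_mul]
    _ = ∑ k ∈ Finset.range (n + 1),
          ∑' w, matPow M k x x * matPow (Qm M x) (n - k) x w * M w x :=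
        Summable.tsum_finsetSum fun _ _ => ENNReal.summable
    _ = ∑ k ∈ Finset.range (n + 1), matPow M k x x * fr M x (n - k) := by
        refine Finset.sum_congr rfl fun k hk => ?_
        rw [fr, ← ENNReal.tsum_mul_left]
        exact tsum_congr fun w => (mul_assoc _ _ _)

/-- Cauchy product for `ℝ≥0∞`-valued sequences. -/
lemma tsum_cauchy (a b : ℕ → ℝ≥0∞) :
    ∑' n, ∑ k ∈ Finset.range (n + 1), a k * b (n - k) = (∑' k, a k) * ∑' m, b m := by
  have h1 : ∀ n : ℕ, ∑ k ∈ Finset.range (n + 1), a k * b (n - k)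
      = ∑' k : ℕ, if k ≤ n then a k * b (n - k) else 0 := by
    intro n
    rw [tsum_eq_sum (s := Finset.range (n + 1)) ?_]
    · exact Finset.sum_congr rfl fun k hk => by
        rw [if_pos (by simpa [Nat.lt_succ] using hk)]
    · intro k hk
      rw [if_neg]
      simpa [Nat.lt_succ, not_le] using hk
  calc ∑' n, ∑ k ∈ Finset.range (n + 1), a k * b (n - k)
      = ∑' n, ∑' k : ℕ, if k ≤ n then a k * b (n - k) else 0 := tsum_congr h1
    _ = ∑' k, ∑' n : ℕ, if k ≤ n then a k * b (n - k) else 0 := ENNReal.tsum_comm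
    _ = ∑' k, ∑' m : ℕ, a k * b m := by
        refine tsum_congr fun k => ?_
        have hinj : Function.Injective (fun m : ℕ => m + k) := add_left_injective k
        rw [← Function.Injective.tsum_eq hinj
          (f := fun n : ℕ => if k ≤ n then a k * b (n - k) else 0) ?_]
        · refine tsum_congr fun m => ?_
          simp only [Nat.le_add_left, if_pos, Nat.add_sub_cancel]
        · intro n hn
          rcases le_or_gt k n with h | h
          · exact ⟨n - k, Nat.sub_add_cancel h⟩
          · exact absurd (if_neg (not_le.mpr h)) hn
    _ = (∑' k, a k) * ∑' m, b m := by
        rw [← ENNReal.tsum_mul_right]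
        exact tsum_congr fun k => ENNReal.tsum_mul_left

/-- The generating-function renewal equation `G = (1 + G) * F`. -/
lemma renewal_eq (M : S → S → ℝ≥0∞) (x : S) (t : ℝ≥0∞) :
    ∑' n, t ^ (n + 1) * matPow M (n + 1) x x
      = (1 + ∑' n, t ^ (n + 1) * matPow M (n + 1) x x) * ∑' n, t ^ (n + 1) * fr M x n := by
  set a : ℕ → ℝ≥0∞ := fun k => t ^ k * matPow M k x x with ha
  set b : ℕ → ℝ≥0∞ := fun m => t ^ (m + 1) * fr M x m with hb
  have h1 : ∀ n : ℕ, t ^ (n + 1) * matPow M (n + 1) x x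
      = ∑ k ∈ Finset.range (n + 1), a k * b (n - k) := by
    intro n
    rw [matPow_diag_renewal, Finset.mul_sum]
    refine Finset.sum_congr rfl fun k hk => ?_
    have hk' : k ≤ n := by simpa [Nat.lt_succ] using hk
    simp only [ha, hb]
    have hpow : t ^ (n + 1) = t ^ k * t ^ (n - k + 1) := by
      rw [← pow_add]; congr 1; omega
    rw [hpow]; ring
  conv_lhs => rw [tsum_congr h1, tsum_cauchy a b]
  congr 1
  · rw [tsum_eq_zero_add' (f := a) ENNReal.summable]
    simp [ha, matPow_zero]

/-- Partial-sum version of one inequality in the renewal equation. -/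
lemma partial_le_renewal (M : S → S → ℝ≥0∞) (x : S) (t : ℝ≥0∞) (N : ℕ) :
    ∑ n ∈ Finset.range N, t ^ (n + 1) * matPow M (n + 1) x x
      ≤ (1 + ∑ n ∈ Finset.range N, t ^ (n + 1) * matPow M (n + 1) x x)
          * ∑' n, t ^ (n + 1) * fr M x n := by
  set a' : ℕ → ℝ≥0∞ := fun k =>
    if k < N then t ^ k * matPow M k x x else 0 with ha'
  set b : ℕ → ℝ≥0∞ := fun m => t ^ (m + 1) * fr M x m with hb
  have h1 : ∀ n ∈ Finset.range N, t ^ (n + 1) * matPow M (n + 1) x x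
      = ∑ k ∈ Finset.range (n + 1), a' k * b (n - k) := by
    intro n hn
    have hnN : n < N := Finset.mem_range.mp hn
    rw [matPow_diag_renewal, Finset.mul_sum]
    refine Finset.sum_congr rfl fun k hk => ?_
    have hk' : k ≤ n := by simpa [Nat.lt_succ] using hk
    simp only [ha', hb, if_pos (lt_of_le_of_lt hk' hnN)]
    have hpow : t ^ (n + 1) = t ^ k * t ^ (n - k + 1) := by
      rw [← pow_add]; congr 1; omega
    rw [hpow]; ring
  calc ∑ n ∈ Finset.range N, t ^ (n + 1) * matPow M (n + 1) x x
      = ∑ n ∈ Finset.range N, ∑ k ∈ Finset.range (n + 1), a' k * b (n - k) :=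
        Finset.sum_congr rfl h1
    _ ≤ ∑' n, ∑ k ∈ Finset.range (n + 1), a' k * b (n - k) := ENNReal.sum_le_tsum _
    _ = (∑' k, a' k) * ∑' m, b m := tsum_cauchy a' b
    _ ≤ (1 + ∑ n ∈ Finset.range N, t ^ (n + 1) * matPow M (n + 1) x x)
          * ∑' n, t ^ (n + 1) * fr M x n := by
        refine mul_le_mul' ?_ le_rfl
        have h2 : ∑' k, a' k = ∑ k ∈ Finset.range N, t ^ k * matPow M k x x := by
          rw [tsum_eq_sum (s := Finset.range N) ?_]
          · exact Finset.sum_congr rfl fun k hk =>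
              if_pos (Finset.mem_range.mp hk)
          · intro k hk
            exact if_neg (by simpa using hk)
        rw [h2]
        rcases N with _ | N
        · simp
        · rw [Finset.sum_range_succ']
          have h00 : t ^ 0 * matPow M 0 x x = 1 := by
            rw [pow_zero, matPow_zero, if_pos rfl, one_mul]
          rw [h00, add_comm]
          refine add_le_add le_rfl ?_
          exact Finset.sum_le_sum_of_subset
            (Finset.range_subset_range.mpr (Nat.le_succ N))

/-- Diagonal entries of matrix powers are finite when the spectral radius data is finite. -/
lemma matPow_diag_ne_top (M : S → S → ℝ≥0∞) (x : S) (ρ : ℝ≥0∞) (hρT : ρ ≠ ⊤)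
    (h : Tendsto (fun n : ℕ => (matPow M n x x) ^ ((n : ℝ)⁻¹))
      (atTop ⊓ Filter.principal {n : ℕ | 0 < matPow M n x x}) (nhds ρ)) :
    ∀ n, matPow M n x x ≠ ⊤ := by
  intro m hm
  have hm0 : m ≠ 0 := by
    intro h0
    rw [h0, matPow_zero, if_pos rfl] at hm
    exact ENNReal.one_ne_top hm
  have key : ∀ k : ℕ, matPow M (m * (k + 1)) x x = ⊤ := by
    intro k
    induction k with
    | zero => simpa using hm
    | succ k ih =>
      have hle : matPow M (m * (k + 1)) x x * matPow M m x x
          ≤ matPow M (m * (k + 2)) x x := by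
        have := mul_matPow_le M (m * (k + 1)) m x x x
        rwa [show m * (k + 1) + m = m * (k + 2) by ring] at this
      rw [ih, hm, ENNReal.top_mul ENNReal.top_ne_zero] at hle
      exact top_le_iff.mp hle
  have hev : ∀ᶠ n in atTop ⊓ Filter.principal {n : ℕ | 0 < matPow M n x x},
      (matPow M n x x) ^ ((n : ℝ)⁻¹) < ρ + 1 :=
    h.eventually_lt_const (ENNReal.lt_add_right hρT one_ne_zero)
  rw [eventually_inf_principal] at hev
  rw [eventually_atTop] at hev
  obtain ⟨N, hN⟩ := hev
  have hidx : N ≤ m * (N + 1) := by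
    calc N ≤ N + 1 := Nat.le_succ N
    _ = 1 * (N + 1) := (one_mul _).symm
    _ ≤ m * (N + 1) := Nat.mul_le_mul_right _ (Nat.one_le_iff_ne_zero.mpr hm0)
  have hpos : 0 < matPow M (m * (N + 1)) x x := by rw [key N]; exact lt_of_lt_of_le one_pos le_top
  have := hN (m * (N + 1)) hidx hpos
  rw [key N, ENNReal.top_rpow_of_pos (by positivity)] at this
  exact absurd this (by simp [ENNReal.add_lt_top, lt_top_iff_ne_top, hρT])

/-- Root test: the power series of the diagonal converges strictly inside radius `ρ⁻¹`. -/
lemma tsum_pow_mul_diag_ne_top (M : S → S → ℝ≥0∞) (x : S) (ρ : ℝ≥0∞)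
    (hρ0 : 0 < ρ) (hρT : ρ ≠ ⊤)
    (h : Tendsto (fun n : ℕ => (matPow M n x x) ^ ((n : ℝ)⁻¹))
      (atTop ⊓ Filter.principal {n : ℕ | 0 < matPow M n x x}) (nhds ρ))
    (hfin : ∀ n, matPow M n x x ≠ ⊤) (t : ℝ≥0∞) (ht : t < ρ⁻¹) :
    ∑' n, t ^ (n + 1) * matPow M (n + 1) x x ≠ ⊤ := by
  rcases eq_or_ne t 0 with rfl | ht0
  · simp
  have htT : t ≠ ⊤ := ht.ne_top
  have hρt : ρ < t⁻¹ := ENNReal.lt_inv_iff_lt_inv.mp ht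
  obtain ⟨c, hc1, hc2⟩ := exists_between hρt
  have htc : t * c < 1 := by
    have : t * c < t * t⁻¹ :=
      (ENNReal.mul_lt_mul_iff_right ht0 htT).mpr hc2
    rwa [ENNReal.mul_inv_cancel ht0 htT] at this
  have hev : ∀ᶠ n in atTop ⊓ Filter.principal {n : ℕ | 0 < matPow M n x x},
      (matPow M n x x) ^ ((n : ℝ)⁻¹) < c :=
    h.eventually_lt_const hc1
  rw [eventually_inf_principal, eventually_atTop] at hev
  obtain ⟨N, hN⟩ := hev
  have hbound : ∀ n, N ≤ n → n ≠ 0 → matPow M n x x ≤ c ^ n := by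
    intro n hn hn0
    rcases eq_or_ne (matPow M n x x) 0 with h0 | h0
    · rw [h0]; exact zero_le
    · have hlt := hN n hn (pos_iff_ne_zero.mpr h0)
      calc matPow M n x x
          = ((matPow M n x x) ^ ((n : ℝ)⁻¹)) ^ n :=
            (ENNReal.rpow_inv_natCast_pow hn0 _).symm
        _ ≤ c ^ n := pow_le_pow_left' hlt.le n
  rw [← Summable.sum_add_tsum_nat_add' (k := N)
    (ENNReal.summable (f := fun i : ℕ => t ^ (i + N + 1) * matPow M (i + N + 1) x x))]
  refine ENNReal.add_ne_top.mpr ⟨?_, ?_⟩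
  · refine (ENNReal.sum_lt_top.mpr ?_).ne
    intro n _
    exact ENNReal.mul_lt_top (ENNReal.pow_ne_top htT).lt_top (hfin (n + 1)).lt_top
  · have hle : ∑' (n : ℕ), t ^ (n + N + 1) * matPow M (n + N + 1) x x
        ≤ ∑' (n : ℕ), (t * c) ^ (n + N + 1) := by
      refine ENNReal.tsum_le_tsum fun n => ?_
      rw [mul_pow]
      exact mul_le_mul' le_rfl (hbound (n + N + 1) (by omega) (by omega))
    refine ne_top_of_le_ne_top ?_ hle
    have hgeo : ∑' (n : ℕ), (t * c) ^ (n + N + 1) ≤ ∑' (n : ℕ), (t * c) ^ n := by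
      refine ENNReal.tsum_le_tsum fun n => ?_
      rw [show n + N + 1 = n + (N + 1) by omega, pow_add]
      calc (t * c) ^ n * (t * c) ^ (N + 1)
          ≤ (t * c) ^ n * 1 := mul_le_mul' le_rfl (pow_le_one₀ (zero_le) htc.le)
        _ = (t * c) ^ n := mul_one _
    refine ne_top_of_le_ne_top ?_ hgeo
    rw [ENNReal.tsum_geometric (t * c)]
    refine ENNReal.inv_ne_top.mpr ?_
    intro h0
    rw [tsub_eq_zero_iff_le] at h0
    exact absurd htc (not_lt.mpr h0)

/-- From positivity of a matrix power, positivity of a taboo power. -/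
lemma exists_Qm_pos (M : S → S → ℝ≥0∞) (x : S) :
    ∀ n u, 0 < matPow M n x u → ∃ p, 0 < matPow (Qm M x) p x u := by
  intro n
  induction n with
  | zero =>
    intro u h
    exact ⟨0, h⟩
  | succ n ih =>
    intro u h
    rw [matPow_succ] at h
    have hex : ∃ z, matPow M n x z * M z u ≠ 0 := by
      by_contra hc
      push_neg at hc
      rw [ENNReal.tsum_eq_zero.mpr hc] at h
      exact lt_irrefl 0 h
    obtain ⟨z, hz⟩ := hex
    have h1 : 0 < matPow M n x z := by
      rcases eq_or_ne (matPow M n x z) 0 with h0 | h0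
      · exact absurd (by rw [h0, zero_mul]) hz
      · exact pos_iff_ne_zero.mpr h0
    have h2 : 0 < M z u := by
      rcases eq_or_ne (M z u) 0 with h0 | h0
      · exact absurd (by rw [h0, mul_zero]) hz
      · exact pos_iff_ne_zero.mpr h0
    by_cases hu : u = x
    · subst hu
      exact ⟨0, by rw [matPow_zero, if_pos rfl]; exact one_pos⟩
    · obtain ⟨p, hp⟩ := ih z h1
      refine ⟨p + 1, ?_⟩
      have hle : matPow (Qm M x) p x z * Qm M x z u ≤ matPow (Qm M x) (p + 1) x u := by
        rw [matPow_succ]; exact ENNReal.le_tsum z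
      refine lt_of_lt_of_le ?_ hle
      have : Qm M x z u = M z u := if_neg hu
      rw [this]
      exact ENNReal.mul_pos hp.ne' h2.ne'

/-- From positivity of a matrix power into `x`, a first-passage path into `x`. -/
lemma exists_firstpassage (M : S → S → ℝ≥0∞) (x : S) :
    ∀ n s, 0 < matPow M (n + 1) s x →
      ∃ q w, 0 < matPow (Qm M x) q s w ∧ 0 < M w x := by
  intro n
  induction n with
  | zero =>
    intro s h
    rw [matPow_one] at h
    exact ⟨0, s, by rw [matPow_zero, if_pos rfl]; exact one_pos, h⟩
  | succ n ih =>
    intro s h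
    have hsplit : matPow M (n + 1 + 1) s x = ∑' z, M s z * matPow M (n + 1) z x := by
      have := matPow_add M 1 (n + 1) s x
      rw [show 1 + (n + 1) = n + 1 + 1 by omega] at this
      rw [this]
      exact tsum_congr fun z => by rw [matPow_one]
    rw [hsplit] at h
    have hex : ∃ z, M s z * matPow M (n + 1) z x ≠ 0 := by
      by_contra hc
      push_neg at hc
      rw [ENNReal.tsum_eq_zero.mpr hc] at h
      exact lt_irrefl 0 h
    obtain ⟨z, hz⟩ := hex
    have h1 : 0 < M s z := by
      rcases eq_or_ne (M s z) 0 with h0 | h0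
      · exact absurd (by rw [h0, zero_mul]) hz
      · exact pos_iff_ne_zero.mpr h0
    have h2 : 0 < matPow M (n + 1) z x := by
      rcases eq_or_ne (matPow M (n + 1) z x) 0 with h0 | h0
      · exact absurd (by rw [h0, mul_zero]) hz
      · exact pos_iff_ne_zero.mpr h0
    by_cases hzx : z = x
    · subst hzx
      exact ⟨0, s, by rw [matPow_zero, if_pos rfl]; exact one_pos, h1⟩
    · obtain ⟨q, w, hq, hw⟩ := ih z h2
      refine ⟨q + 1, w, ?_, hw⟩
      have hle : matPow (Qm M x) 1 s z * matPow (Qm M x) q z w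
          ≤ matPow (Qm M x) (1 + q) s w := mul_matPow_le _ 1 q s z w
      rw [show q + 1 = 1 + q by omega]
      refine lt_of_lt_of_le ?_ hle
      rw [matPow_one]
      have : Qm M x s z = M s z := if_neg hzx
      rw [this]
      exact ENNReal.mul_pos h1.ne' hq.ne'

/-- Taboo powers are finite provided there is a positive continuation to `x`
and all first-return weights are finite. -/
lemma matPow_Qm_ne_top (M : S → S → ℝ≥0∞) (x : S) (hfr : ∀ n, fr M x n ≠ ⊤)
    {p : ℕ} {z : S} (hcont : ∃ q w, 0 < matPow (Qm M x) q z w ∧ 0 < M w x) :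
    matPow (Qm M x) p x z ≠ ⊤ := by
  obtain ⟨q, w, hq, hw⟩ := hcont
  intro hT
  have h1 : matPow (Qm M x) p x z * matPow (Qm M x) q z w
      ≤ matPow (Qm M x) (p + q) x w := mul_matPow_le _ p q x z w
  rw [hT, ENNReal.top_mul hq.ne'] at h1
  have h2 : matPow (Qm M x) (p + q) x w * M w x ≤ fr M x (p + q) :=
    ENNReal.le_tsum w
  rw [top_le_iff.mp h1, ENNReal.top_mul hw.ne'] at h2
  exact hfr (p + q) (top_le_iff.mp h2)

lemma ennreal_mul_lt_mul_of_le_of_lt {a a' b b' : ℝ≥0∞} (ha : a ≤ a') (hb : b < b')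
    (ha'0 : a' ≠ 0) (ha'T : a' ≠ ⊤) : a * b < a' * b' :=
  calc a * b ≤ a' * b := mul_le_mul' ha le_rfl
    _ < a' * b' := (ENNReal.mul_lt_mul_iff_right ha'0 ha'T).mpr hb

lemma ennreal_mul_lt_mul_of_lt_of_le {a a' b b' : ℝ≥0∞} (ha : a < a') (hb : b ≤ b')
    (hb'0 : b' ≠ 0) (hb'T : b' ≠ ⊤) : a * b < a' * b' :=
  calc a * b ≤ a * b' := mul_le_mul' le_rfl hb
    _ < a' * b' := by
      rw [mul_comm a b', mul_comm a' b']
      exact (ENNReal.mul_lt_mul_iff_right hb'0 hb'T).mpr ha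

end Aux

theorem R_transient_of_eq_spectral_radius [Countable S] [DecidableEq S]
    (A B : S → S → ℝ≥0∞) (hAfin : ∀ x y, A x y ≠ ⊤) (hBfin : ∀ x y, B x y ≠ ⊤)
    (hAirr : ∀ x y : S, ∃ n, 1 ≤ n ∧ 0 < matPow A n x y)
    (hBirr : ∀ x y : S, ∃ n, 1 ≤ n ∧ 0 < matPow B n x y)
    (hle : ∀ x y, A x y ≤ B x y) (hne : A ≠ B)
    (ρA ρB : ℝ≥0∞) (hρA0 : 0 < ρA) (hρBT : ρB ≠ ⊤)
    (hρA : ∀ x, Tendsto (fun n : ℕ => (matPow A n x x) ^ ((n : ℝ)⁻¹))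
        (atTop ⊓ Filter.principal {n : ℕ | 0 < matPow A n x x}) (nhds ρA))
    (hρB : ∀ x, Tendsto (fun n : ℕ => (matPow B n x x) ^ ((n : ℝ)⁻¹))
        (atTop ⊓ Filter.principal {n : ℕ | 0 < matPow B n x x}) (nhds ρB))
    (heq : ρB = ρA) :
    ∀ x : S, (∑' n : ℕ, ρA⁻¹ ^ (n + 1) * matPow A (n + 1) x x) ≠ ⊤ := by
  intro x
  have hρB0 : 0 < ρB := heq ▸ hρA0
  have hρAT : ρA ≠ ⊤ := heq ▸ hρBT
  set r : ℝ≥0∞ := ρA⁻¹ with hr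
  have hr0 : 0 < r := ENNReal.inv_pos.mpr hρAT
  have hrT : r ≠ ⊤ := ENNReal.inv_ne_top.mpr hρA0.ne'
  -- finiteness of diagonal entries
  have hGB : ∀ n, matPow B n x x ≠ ⊤ := matPow_diag_ne_top B x ρB hρBT (hρB x)
  have hGA : ∀ n, matPow A n x x ≠ ⊤ := fun n =>
    ne_top_of_le_ne_top (hGB n) (matPow_mono hle n x x)
  -- F_B(t) < 1 for t < r
  have hFB_lt : ∀ t : ℝ≥0∞, t < r → ∑' n, t ^ (n + 1) * fr B x n < 1 := by
    intro t htr
    have hGgen : ∑' n, t ^ (n + 1) * matPow B (n + 1) x x ≠ ⊤ := by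
      refine tsum_pow_mul_diag_ne_top B x ρB hρB0 hρBT (hρB x) hGB t ?_
      rw [heq]
      exact htr
    by_contra hc
    push_neg at hc
    have heqn := renewal_eq B x t
    have : 1 + ∑' n, t ^ (n + 1) * matPow B (n + 1) x x
        ≤ ∑' n, t ^ (n + 1) * matPow B (n + 1) x x := by
      calc 1 + ∑' n, t ^ (n + 1) * matPow B (n + 1) x x
          = (1 + ∑' n, t ^ (n + 1) * matPow B (n + 1) x x) * 1 := (mul_one _).symm
        _ ≤ (1 + ∑' n, t ^ (n + 1) * matPow B (n + 1) x x)
            * ∑' n, t ^ (n + 1) * fr B x n := mul_le_mul' le_rfl hc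
        _ = ∑' n, t ^ (n + 1) * matPow B (n + 1) x x := heqn.symm
    have hlt : ∑' n, t ^ (n + 1) * matPow B (n + 1) x x
        < 1 + ∑' n, t ^ (n + 1) * matPow B (n + 1) x x := by
      rw [add_comm]
      exact ENNReal.lt_add_right hGgen one_ne_zero
    exact absurd this (not_le.mpr hlt)
  -- first-return weights of B are finite
  have hfrB : ∀ n, fr B x n ≠ ⊤ := by
    intro n hT
    have h2 := hFB_lt (r / 2) (ENNReal.half_lt_self hr0.ne' hrT)
    have hterm : (r / 2) ^ (n + 1) * fr B x n
        ≤ ∑' m, (r / 2) ^ (m + 1) * fr B x m := ENNReal.le_tsum n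
    rw [hT, ENNReal.mul_top (by
      exact pow_ne_zero (n + 1) (ENNReal.half_pos hr0.ne').ne')] at hterm
    rw [top_le_iff.mp hterm] at h2
    exact absurd h2 (by simp)
  have hfrA : ∀ n, fr A x n ≠ ⊤ := fun n =>
    ne_top_of_le_ne_top (hfrB n) (fr_mono hle x n)
  -- F_B(r) ≤ 1 by continuity from the left
  have hFB_le : ∑' n, r ^ (n + 1) * fr B x n ≤ 1 := by
    rw [ENNReal.tsum_eq_iSup_sum]
    refine iSup_le fun s => ?_
    have hcont : ContinuousWithinAt
        (fun t : ℝ≥0∞ => ∑ n ∈ s, t ^ (n + 1) * fr B x n) (Set.Iio r) r := by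
      refine Continuous.continuousWithinAt ?_
      refine continuous_finset_sum s fun n _ => ?_
      exact (ENNReal.continuous_mul_const (hfrB n)).comp (ENNReal.continuous_pow (n + 1))
    have hne : (nhdsWithin r (Set.Iio r)).NeBot :=
      nhdsWithin_Iio_self_neBot' ⟨0, hr0⟩
    refine le_of_tendsto hcont.tendsto ?_
    refine eventually_nhdsWithin_of_forall fun t ht => ?_
    calc ∑ n ∈ s, t ^ (n + 1) * fr B x n
        ≤ ∑' n, t ^ (n + 1) * fr B x n := ENNReal.sum_le_tsum s
      _ ≤ 1 := (hFB_lt t ht).le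
  -- strict inequality of first-return weights at some index
  have hstrict : ∃ n0, fr A x n0 < fr B x n0 := by
    have hex : ∃ u v, A u v < B u v := by
      by_contra hc
      push_neg at hc
      exact hne (funext fun u => funext fun v => le_antisymm (hle u v) (hc u v))
    obtain ⟨u, v, huv⟩ := hex
    obtain ⟨m, _, hmpos⟩ := hBirr x u
    obtain ⟨p, hp⟩ := exists_Qm_pos B x m u hmpos
    by_cases hvx : v = x
    · rw [hvx] at huv
      have hBux : 0 < B u x := lt_of_le_of_lt (zero_le) huv
      have ha'T : matPow (Qm B x) p x u ≠ ⊤ :=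
        matPow_Qm_ne_top B x hfrB
          ⟨0, u, by rw [matPow_zero, if_pos rfl]; exact one_pos, hBux⟩
      refine ⟨p, ?_⟩
      refine ENNReal.tsum_lt_tsum (i := u) (hfrA p)
        (fun w => mul_le_mul' (matPow_mono (Qm_mono hle x) p x w) (hle w x)) ?_
      exact ennreal_mul_lt_mul_of_le_of_lt
        (matPow_mono (Qm_mono hle x) p x u) huv hp.ne' ha'T
    · -- v ≠ x : key edge inside the taboo region
      obtain ⟨m', hm'1, hm'pos⟩ := hBirr v x
      obtain ⟨m'', rfl⟩ : ∃ m'', m' = m'' + 1 := ⟨m' - 1, by omega⟩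
      obtain ⟨q, w, hq, hw⟩ := exists_firstpassage B x m'' v hm'pos
      have hQuv : (0 : ℝ≥0∞) < Qm B x u v := by
        rw [Qm]; simp only [if_neg hvx]
        exact lt_of_le_of_lt (zero_le) huv
      have hcont_u : ∃ q' w', 0 < matPow (Qm B x) q' u w' ∧ 0 < B w' x := by
        refine ⟨1 + q, w, ?_, hw⟩
        refine lt_of_lt_of_le ?_ (mul_matPow_le (Qm B x) 1 q u v w)
        rw [matPow_one]
        exact ENNReal.mul_pos hQuv.ne' hq.ne'
      have hfinB_u : matPow (Qm B x) p x u ≠ ⊤ := matPow_Qm_ne_top B x hfrB hcont_u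
      have hfinB_v : matPow (Qm B x) (p + 1) x v ≠ ⊤ :=
        matPow_Qm_ne_top B x hfrB ⟨q, w, hq, hw⟩
      have hfinB_w : matPow (Qm B x) (p + 1 + q) x w ≠ ⊤ :=
        matPow_Qm_ne_top B x hfrB
          ⟨0, w, by rw [matPow_zero, if_pos rfl]; exact one_pos, hw⟩
      -- strict inequality at v
      have hstep1 : matPow (Qm A x) (p + 1) x v < matPow (Qm B x) (p + 1) x v := by
        rw [matPow_succ, matPow_succ]
        have hne_top : ∑' z, matPow (Qm A x) p x z * Qm A x z v ≠ ⊤ := by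
          refine ne_top_of_le_ne_top ?_ (ENNReal.tsum_le_tsum fun z =>
            mul_le_mul' (matPow_mono (Qm_mono hle x) p x z) (Qm_mono hle x z v))
          rw [← matPow_succ]
          exact hfinB_v
        refine ENNReal.tsum_lt_tsum (i := u) hne_top (fun z =>
          mul_le_mul' (matPow_mono (Qm_mono hle x) p x z) (Qm_mono hle x z v)) ?_
        refine ennreal_mul_lt_mul_of_le_of_lt
          (matPow_mono (Qm_mono hle x) p x u) ?_ hp.ne' hfinB_u
        rw [Qm, Qm]; simp only [if_neg hvx]
        exact huv
      -- strict inequality propagated to w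
      have hstep2 : matPow (Qm A x) (p + 1 + q) x w
          < matPow (Qm B x) (p + 1 + q) x w := by
        rw [matPow_add, matPow_add]
        have hne_top : ∑' z, matPow (Qm A x) (p + 1) x z * matPow (Qm A x) q z w ≠ ⊤ := by
          refine ne_top_of_le_ne_top ?_ (ENNReal.tsum_le_tsum fun z =>
            mul_le_mul' (matPow_mono (Qm_mono hle x) (p + 1) x z)
              (matPow_mono (Qm_mono hle x) q z w))
          rw [← matPow_add]
          exact hfinB_w
        have hbT : matPow (Qm B x) q v w ≠ ⊤ := by
          intro hT
          have h1 : matPow (Qm B x) (p + 1) x v * matPow (Qm B x) q v w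
              ≤ matPow (Qm B x) (p + 1 + q) x w := mul_matPow_le _ _ _ _ _ _
          rw [hT, ENNReal.mul_top (lt_of_le_of_lt (zero_le) hstep1).ne'] at h1
          exact hfinB_w (top_le_iff.mp h1)
        refine ENNReal.tsum_lt_tsum (i := v) hne_top (fun z =>
          mul_le_mul' (matPow_mono (Qm_mono hle x) (p + 1) x z)
            (matPow_mono (Qm_mono hle x) q z w)) ?_
        exact ennreal_mul_lt_mul_of_lt_of_le hstep1
          (matPow_mono (Qm_mono hle x) q v w) hq.ne' hbT
      refine ⟨p + 1 + q, ?_⟩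
      refine ENNReal.tsum_lt_tsum (i := w) (hfrA _)
        (fun z => mul_le_mul' (matPow_mono (Qm_mono hle x) _ x z) (hle z x)) ?_
      exact ennreal_mul_lt_mul_of_lt_of_le hstep2 (hle w x) hw.ne' (hBfin w x)
  -- F_A(r) < 1
  have hFA_lt : ∑' n, r ^ (n + 1) * fr A x n < 1 := by
    obtain ⟨n0, hn0⟩ := hstrict
    have hFA_ne : ∑' n, r ^ (n + 1) * fr A x n ≠ ⊤ := by
      refine ne_top_of_le_ne_top (lt_of_le_of_lt hFB_le ENNReal.one_lt_top).ne ?_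
      exact ENNReal.tsum_le_tsum fun n => mul_le_mul' le_rfl (fr_mono hle x n)
    refine lt_of_lt_of_le ?_ hFB_le
    refine ENNReal.tsum_lt_tsum (i := n0) hFA_ne
      (fun n => mul_le_mul' le_rfl (fr_mono hle x n)) ?_
    exact (ENNReal.mul_lt_mul_iff_right (pow_ne_zero (n0 + 1) hr0.ne')
      (ENNReal.pow_ne_top hrT)).mpr hn0
  -- conclude via partial sums of the renewal inequality
  set F : ℝ≥0∞ := ∑' n, r ^ (n + 1) * fr A x n with hF
  have hsub_pos : (1 : ℝ≥0∞) - F ≠ 0 := by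
    rw [← pos_iff_ne_zero]
    exact tsub_pos_of_lt hFA_lt
  have hbound : ∀ N : ℕ,
      ∑ n ∈ Finset.range N, r ^ (n + 1) * matPow A (n + 1) x x ≤ F / (1 - F) := by
    intro N
    set SN : ℝ≥0∞ := ∑ n ∈ Finset.range N, r ^ (n + 1) * matPow A (n + 1) x x with hSN
    have hSfin : SN ≠ ⊤ := by
      refine (ENNReal.sum_lt_top.mpr ?_).ne
      intro n _
      exact ENNReal.mul_lt_top (ENNReal.pow_ne_top hrT).lt_top (hGA (n + 1)).lt_top
    have h1 : SN ≤ (1 + SN) * F := partial_le_renewal A x r N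
    have h2 : SN - SN * F ≤ F := by
      rw [tsub_le_iff_right]
      calc SN ≤ (1 + SN) * F := h1
        _ = F + SN * F := by ring
    have h3 : SN * (1 - F) ≤ F := by
      rw [ENNReal.mul_sub (fun _ _ => hSfin), mul_one]
      exact h2
    rw [ENNReal.le_div_iff_mul_le (Or.inl hsub_pos) (Or.inr (hFA_lt.trans ENNReal.one_lt_top).ne)]
    exact h3
  rw [ENNReal.tsum_eq_iSup_sum' (fun N => Finset.range N) Finset.exists_nat_subset_range]
  refine (lt_of_le_of_lt (iSup_le hbound) ?_).ne
  exact ENNReal.div_lt_top (hFA_lt.trans ENNReal.one_lt_top).ne hsub_pos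
end

section
/- Let A be a nonnegative matrix on countable S with graph G, F a subgraph of G, and z ∈ F ∩ S an isolated vertex of F (no edges of F start or end at z), F' := F \ {z}. Then for all x,y ∈ F' ∩ S and λ ∈ ℝ: φ^{F'}_{x,y}(λ) = φ^F_{x,y}(λ) + Σ_{k≥0} φ^F_{x,z}(λ) · (φ^F_{z,z}(λ))^k · φ^F_{z,y}(λ), as an identity in [0,∞]. -/
open scoped ENNReal
open Filter

variable {S : Type*}

/-- Weight of a walk, given as the list of its successive vertices:
the product of the matrix entries along consecutive pairs. -/
noncomputable def chainWeight (A : S → S → ℝ≥0∞) : List S → ℝ≥0∞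
  | [] => 1
  | [_] => 1
  | a :: b :: t => A a b * chainWeight A (b :: t)

/-- Excursions away from a subgraph `F = (Fv, Fe)` from `x` to `y`: walks
`x :: l ++ [y]` of length `l.length + 1 ≥ 1` through edges of the graph of `A`,
whose intermediate vertices avoid `Fv`, and which (in case of length 1) do not
jump through an edge of `Fe`.  An excursion is encoded by the list `l` of its
intermediate vertices. -/
def ExcF (A : S → S → ℝ≥0∞) (Fv : Set S) (Fe : Set (S × S)) (x y : S) : Set (List S) :=
  {l | List.Chain (fun a b => 0 < A a b) x (l ++ [y]) ∧ (∀ v ∈ l, v ∉ Fv) ∧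
       (l = [] → (x, y) ∉ Fe)}

/-- The excursion moment generating function
`φ^F_{x,y}(λ) = Σ_{ω excursion away from F from x to y} e^{λ ℓ(ω)} 𝒜(ω)`. -/
noncomputable def phiF (A : S → S → ℝ≥0∞) (Fv : Set S) (Fe : Set (S × S))
    (x y : S) (lam : ℝ) : ℝ≥0∞ :=
  ∑' l : ExcF A Fv Fe x y,
    ENNReal.ofReal (Real.exp (lam * (l.1.length + 1))) * chainWeight A (x :: (l.1 ++ [y]))

/-! ### Auxiliary definitions -/

noncomputable def wt (A : S → S → ℝ≥0∞) (lam : ℝ) (x y : S) (l : List S) : ℝ≥0∞ :=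
  ENNReal.ofReal (Real.exp (lam * (l.length + 1))) * chainWeight A (x :: (l ++ [y]))

def core (z : S) : List (List S) → List S → List S
  | [], b => b
  | p :: m, b => p ++ z :: core z m b

lemma phiF_eq_tsum (A : S → S → ℝ≥0∞) (Fv : Set S) (Fe : Set (S × S)) (x y : S) (lam : ℝ) :
    phiF A Fv Fe x y lam = ∑' l : List S, (ExcF A Fv Fe x y).indicator (wt A lam x y) l := by
  rw [← tsum_subtype]; rfl

lemma chainWeight_cons_append (A : S → S → ℝ≥0∞) (z : S) :
    ∀ (l₁ : List S) (x : S) (l₂ : List S),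
      chainWeight A (x :: (l₁ ++ z :: l₂)) =
        chainWeight A (x :: (l₁ ++ [z])) * chainWeight A (z :: l₂)
  | [], x, l₂ => by
    cases l₂ with
    | nil => simp [chainWeight]
    | cons c t => simp [chainWeight, mul_assoc]
  | a :: t, x, l₂ => by
    show A x a * chainWeight A (a :: (t ++ z :: l₂)) =
      A x a * chainWeight A (a :: (t ++ [z])) * chainWeight A (z :: l₂)
    rw [chainWeight_cons_append A z t a l₂, mul_assoc]

lemma wt_append (A : S → S → ℝ≥0∞) (lam : ℝ) (x z y : S) (l₁ l₂ : List S) :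
    wt A lam x y (l₁ ++ z :: l₂) = wt A lam x z l₁ * wt A lam z y l₂ := by
  unfold wt
  have h1 : (l₁ ++ z :: l₂) ++ [y] = l₁ ++ z :: (l₂ ++ [y]) := by simp
  rw [h1, chainWeight_cons_append]
  have h2 : lam * (((l₁ ++ z :: l₂).length : ℝ) + 1) =
      lam * (l₁.length + 1) + lam * (l₂.length + 1) := by
    simp only [List.length_append, List.length_cons]
    push_cast
    ring
  rw [h2, Real.exp_add, ENNReal.ofReal_mul (Real.exp_nonneg _)]
  ring

lemma wt_core (A : S → S → ℝ≥0∞) (lam : ℝ) (z y : S) :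
    ∀ (m : List (List S)) (b : List S),
      wt A lam z y (core z m b) = (m.map (wt A lam z z)).prod * wt A lam z y b
  | [], b => by simp [core]
  | p :: m, b => by
    simp only [core, List.map_cons, List.prod_cons]
    rw [wt_append, wt_core A lam z y m b, mul_assoc]

lemma chain_split' {R : S → S → Prop} {a c : S} {l₁ l₂ : List S} :
    List.Chain R a (l₁ ++ c :: l₂) ↔ List.Chain R a (l₁ ++ [c]) ∧ List.Chain R c l₂ :=
  List.isChain_cons_split

lemma chain_cons' {R : S → S → Prop} {a b : S} {l : List S} :
    List.Chain R a (b :: l) ↔ R a b ∧ List.Chain R b l :=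
  List.isChain_cons_cons

lemma chain_core_iff (R : S → S → Prop) (z y : S) :
    ∀ (m : List (List S)) (b : List S),
      List.Chain R z (core z m b ++ [y]) ↔
        (∀ p ∈ m, List.Chain R z (p ++ [z])) ∧ List.Chain R z (b ++ [y])
  | [], b => by simp [core]
  | p :: m, b => by
    have h1 : core z (p :: m) b ++ [y] = p ++ z :: (core z m b ++ [y]) := by
      simp [core]
    rw [h1, chain_split', chain_core_iff R z y m b]
    simp only [List.forall_mem_cons]
    tauto

lemma mem_core_iff (z v : S) :
    ∀ (m : List (List S)) (b : List S),
      v ∈ core z m b ↔ (m ≠ [] ∧ v = z) ∨ v ∈ b ∨ ∃ p ∈ m, v ∈ p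
  | [], b => by simp [core]
  | p :: m, b => by
    simp only [core, List.mem_append, List.mem_cons, mem_core_iff z v m b]
    constructor
    · rintro (h | h | h | h | ⟨q, hq, hv⟩)
      · exact Or.inr (Or.inr ⟨p, by simp, h⟩)
      · exact Or.inl ⟨by simp, h⟩
      · exact Or.inl ⟨by simp, h.2⟩
      · exact Or.inr (Or.inl h)
      · exact Or.inr (Or.inr ⟨q, by simp [hq], hv⟩)
    · rintro (⟨-, h⟩ | h | ⟨q, hq, hv⟩)
      · exact Or.inr (Or.inl h)
      · exact Or.inr (Or.inr (Or.inr (Or.inl h)))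
      · rcases hq with rfl | hq
        · exact Or.inl hv
        · exact Or.inr (Or.inr (Or.inr (Or.inr ⟨q, hq, hv⟩)))

lemma prefix_inj (z : S) : ∀ (a a' u u' : List S), z ∉ a → z ∉ a' →
    a ++ z :: u = a' ++ z :: u' → a = a' ∧ u = u'
  | [], [], u, u', _, _, h => by simpa using h
  | [], c :: t, u, u', _, ha', h => by
    simp only [List.nil_append, List.cons_append, List.cons.injEq] at h
    exact absurd (h.1 ▸ (List.mem_cons_self : c ∈ c :: t)) (h.1 ▸ ha')
  | c :: t, [], u, u', ha, _, h => by
    simp only [List.nil_append, List.cons_append, List.cons.injEq] at h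
    exact absurd ((List.mem_cons_self : c ∈ c :: t)) (h.1 ▸ ha)
  | c :: t, c' :: t', u, u', ha, ha', h => by
    simp only [List.cons_append, List.cons.injEq] at h
    obtain ⟨rfl, h⟩ := h
    have := prefix_inj z t t' u u' (fun hm => ha (List.mem_cons_of_mem _ hm))
      (fun hm => ha' (List.mem_cons_of_mem _ hm)) h
    exact ⟨by rw [this.1], this.2⟩

lemma core_inj (z : S) : ∀ (m m' : List (List S)) (b b' : List S),
    (∀ p ∈ m, z ∉ p) → (∀ p ∈ m', z ∉ p) → z ∉ b → z ∉ b' →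
    core z m b = core z m' b' → m = m' ∧ b = b'
  | [], [], b, b', _, _, _, _, h => ⟨rfl, h⟩
  | [], p :: m', b, b', _, _, hb, _, h => by
    exfalso
    apply hb
    rw [show b = core z [] b from rfl, h]
    simp [core]
  | p :: m, [], b, b', _, _, _, hb', h => by
    exfalso
    apply hb'
    rw [show b' = core z [] b' from rfl, ← h]
    simp [core]
  | p :: m, p' :: m', b, b', hm, hm', hb, hb', h => by
    simp only [core] at h
    obtain ⟨hpp, hcc⟩ := prefix_inj z p p' _ _ (hm p (by simp)) (hm' p' (by simp)) h
    subst hpp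
    have := core_inj z m m' b b' (fun q hq => hm q (by simp [hq]))
      (fun q hq => hm' q (by simp [hq])) hb hb' hcc
    exact ⟨by rw [this.1], this.2⟩

lemma exists_decomp (z : S) : ∀ (l : List S), z ∈ l →
    ∃ a m b, z ∉ a ∧ (∀ p ∈ m, z ∉ p) ∧ z ∉ b ∧ l = a ++ z :: core z m b := by
  intro l
  induction l with
  | nil => simp
  | cons c t ih =>
    intro hzl
    by_cases hc : c = z
    · obtain rfl := hc.symm
      by_cases hzt : z ∈ t
      · obtain ⟨a, m, b, ha, hm, hb, rfl⟩ := ih hzt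
        refine ⟨[], a :: m, b, by simp, ?_, hb, by simp [core]⟩
        intro p hp
        rcases List.mem_cons.mp hp with rfl | hp
        · exact ha
        · exact hm p hp
      · exact ⟨[], [], t, by simp, by simp, hzt, by simp [core]⟩
    · have hzt : z ∈ t := by
        rcases List.mem_cons.mp hzl with rfl | h
        · exact absurd rfl hc
        · exact h
      obtain ⟨a, m, b, ha, hm, hb, rfl⟩ := ih hzt
      refine ⟨c :: a, m, b, ?_, hm, hb, by simp⟩
      intro h
      rcases List.mem_cons.mp h with rfl | h
      · exact hc rfl
      · exact ha h

lemma chainWeight_ne_zero (A : S → S → ℝ≥0∞) :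
    ∀ (l : List S) (x : S), List.Chain (fun a b => 0 < A a b) x l →
      chainWeight A (x :: l) ≠ 0
  | [], x, _ => by simp [chainWeight]
  | a :: t, x, h => by
    rw [chain_cons'] at h
    simp only [chainWeight]
    exact mul_ne_zero h.1.ne' (chainWeight_ne_zero A t a h.2)

lemma wt_ne_zero (A : S → S → ℝ≥0∞) (lam : ℝ) (x y : S) (l : List S)
    (h : List.Chain (fun a b => 0 < A a b) x (l ++ [y])) : wt A lam x y l ≠ 0 :=
  mul_ne_zero (by positivity) (chainWeight_ne_zero A _ x h)

/-! ### tsum lemmas -/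

lemma tsum_pow_aux {ι : Type*} (f : ι → ℝ≥0∞) :
    ∀ k : ℕ, ∑' v : Fin k → ι, ∏ j, f (v j) = (∑' i, f i) ^ k
  | 0 => by
    have h : ∀ v : Fin 0 → ι, (∏ j, f (v j)) = 1 := by simp
    rw [tsum_congr h, tsum_eq_single (fun (i : Fin 0) => i.elim0)
      (fun b' hb' => absurd (funext fun i => i.elim0) hb')]
    simp
  | k + 1 => by
    have h : ∀ p : ι × (Fin k → ι),
        (∏ j, f ((Fin.consEquiv (fun _ : Fin (k+1) => ι)) p j))
          = f p.1 * ∏ j, f (p.2 j) := by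
      intro p
      rw [Fin.prod_univ_succ]
      simp [Fin.consEquiv]
    calc ∑' v : Fin (k+1) → ι, ∏ j, f (v j)
        = ∑' p : ι × (Fin k → ι), ∏ j, f ((Fin.consEquiv (fun _ : Fin (k+1) => ι)) p j) :=
          ((Fin.consEquiv (fun _ : Fin (k+1) => ι)).tsum_eq (fun v => ∏ j, f (v j))).symm
      _ = ∑' p : ι × (Fin k → ι), f p.1 * ∏ j, f (p.2 j) := tsum_congr h
      _ = ∑' a : ι, ∑' w : Fin k → ι, f a * ∏ j, f (w j) :=
          ENNReal.tsum_prod (f := fun (a : ι) (w : Fin k → ι) => f a * ∏ j, f (w j))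
      _ = (∑' i, f i) * ∑' w : Fin k → ι, ∏ j, f (w j) := by
          simp only [ENNReal.tsum_mul_left, ENNReal.tsum_mul_right]
      _ = (∑' i, f i) ^ (k + 1) := by rw [tsum_pow_aux f k, pow_succ']

lemma tsum_list_prod {ι : Type*} (f : ι → ℝ≥0∞) :
    ∑' m : List ι, (m.map f).prod = ∑' k : ℕ, (∑' i, f i) ^ k := by
  rw [← (List.equivSigmaTuple (α := ι)).symm.tsum_eq (fun m => (m.map f).prod),
    ENNReal.tsum_sigma']
  refine tsum_congr fun k => ?_
  rw [← tsum_pow_aux f k]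
  refine tsum_congr fun v => ?_
  show ((List.ofFn v).map f).prod = _
  rw [List.map_ofFn, List.prod_ofFn]
  rfl

/-! ### Membership lemmas for glued excursions -/

lemma glue_mem_E' {A : S → S → ℝ≥0∞} {Fv : Set S} {Fe : Set (S × S)} {z x y : S}
    {a : List S} {m : List (List S)} {b : List S}
    (ha : a ∈ ExcF A Fv Fe x z) (hm : ∀ p ∈ m, p ∈ ExcF A Fv Fe z z)
    (hb : b ∈ ExcF A Fv Fe z y) :
    a ++ z :: core z m b ∈ ExcF A (Fv \ {z}) Fe x y := by
  obtain ⟨hca, hva, -⟩ := ha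
  obtain ⟨hcb, hvb, -⟩ := hb
  refine ⟨?_, ?_, by simp⟩
  · have h1 : (a ++ z :: core z m b) ++ [y] = a ++ z :: (core z m b ++ [y]) := by simp
    rw [h1, chain_split']
    exact ⟨hca, (chain_core_iff _ z y m b).mpr ⟨fun p hp => (hm p hp).1, hcb⟩⟩
  · intro v hv
    rcases List.mem_append.mp hv with hv | hv
    · exact fun hmem => (hva v hv) hmem.1
    · rcases List.mem_cons.mp hv with rfl | hv
      · exact fun hmem => hmem.2 rfl
      · rcases (mem_core_iff z v m b).mp hv with ⟨-, rfl⟩ | hv | ⟨p, hp, hv⟩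
        · exact fun hmem => hmem.2 rfl
        · exact fun hmem => (hvb v hv) hmem.1
        · exact fun hmem => ((hm p hp).2.1 v hv) hmem.1

lemma pieces_mem {A : S → S → ℝ≥0∞} {Fv : Set S} {Fe : Set (S × S)} {z x y : S}
    (hzF : z ∈ Fv) (hiso : ∀ e ∈ Fe, e.1 ≠ z ∧ e.2 ≠ z)
    {a : List S} {m : List (List S)} {b : List S}
    (hza : z ∉ a) (hzm : ∀ p ∈ m, z ∉ p) (hzb : z ∉ b)
    (hl : a ++ z :: core z m b ∈ ExcF A (Fv \ {z}) Fe x y) :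
    a ∈ ExcF A Fv Fe x z ∧ (∀ p ∈ m, p ∈ ExcF A Fv Fe z z) ∧ b ∈ ExcF A Fv Fe z y := by
  obtain ⟨hc, hv, -⟩ := hl
  rw [show (a ++ z :: core z m b) ++ [y] = a ++ z :: (core z m b ++ [y]) by simp,
    chain_split', chain_core_iff] at hc
  have hgen : ∀ w : List S, z ∉ w → (∀ v ∈ w, v ∈ a ++ z :: core z m b) →
      ∀ v ∈ w, v ∉ Fv := by
    intro w hzw hsub v hvw hvF
    exact (hv v (hsub v hvw)) ⟨hvF, fun hs => hzw (hs ▸ hvw)⟩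
  refine ⟨⟨hc.1, hgen a hza (fun v hv' => List.mem_append.mpr (Or.inl hv')),
      fun _ hFe => (hiso _ hFe).2 rfl⟩, ?_, ?_⟩
  · intro p hp
    refine ⟨hc.2.1 p hp, hgen p (hzm p hp) ?_, fun _ hFe => (hiso _ hFe).2 rfl⟩
    intro v hv'
    exact List.mem_append.mpr (Or.inr (List.mem_cons.mpr
      (Or.inr ((mem_core_iff z v m b).mpr (Or.inr (Or.inr ⟨p, hp, hv'⟩))))))
  · refine ⟨hc.2.2, hgen b hzb ?_, fun _ hFe => (hiso _ hFe).1 rfl⟩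
    intro v hv'
    exact List.mem_append.mpr (Or.inr (List.mem_cons.mpr
      (Or.inr ((mem_core_iff z v m b).mpr (Or.inr (Or.inl hv'))))))

theorem phiF_remove_isolated_vertex [Countable S] [DecidableEq S]
    (A : S → S → ℝ≥0∞) (hfin : ∀ x y, A x y ≠ ⊤)
    (Fv : Set S) (Fe : Set (S × S))
    (hsub : ∀ e ∈ Fe, 0 < A e.1 e.2 ∧ e.1 ∈ Fv ∧ e.2 ∈ Fv)
    (z : S) (hz : z ∈ Fv) (hiso : ∀ e ∈ Fe, e.1 ≠ z ∧ e.2 ≠ z)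
    (x y : S) (hx : x ∈ Fv) (hxz : x ≠ z) (hy : y ∈ Fv) (hyz : y ≠ z) (lam : ℝ) :
    phiF A (Fv \ {z}) Fe x y lam
      = phiF A Fv Fe x y lam
        + ∑' k : ℕ, phiF A Fv Fe x z lam * (phiF A Fv Fe z z lam) ^ k * phiF A Fv Fe z y lam := by
  classical
  -- split the LHS according to whether the excursion visits z
  have hsplit : ∀ l : List S,
      (ExcF A (Fv \ {z}) Fe x y).indicator (wt A lam x y) l
        = (ExcF A Fv Fe x y).indicator (wt A lam x y) l
          + ((ExcF A (Fv \ {z}) Fe x y) ∩ {l | z ∈ l}).indicator (wt A lam x y) l := by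
    intro l
    by_cases hzl : z ∈ l
    · have h1 : l ∉ ExcF A Fv Fe x y := fun hl => (hl.2.1 z hzl) hz
      by_cases h2 : l ∈ ExcF A (Fv \ {z}) Fe x y
      · rw [Set.indicator_of_mem h2, Set.indicator_of_notMem h1,
          Set.indicator_of_mem (show l ∈ ExcF A (Fv \ {z}) Fe x y ∩ {l | z ∈ l} from ⟨h2, hzl⟩),
          zero_add]
      · rw [Set.indicator_of_notMem h2, Set.indicator_of_notMem h1,
          Set.indicator_of_notMem (fun hc => h2 hc.1), zero_add]
    · have h3 : l ∈ ExcF A (Fv \ {z}) Fe x y ↔ l ∈ ExcF A Fv Fe x y := by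
        constructor
        · rintro ⟨hc, hv, hf⟩
          exact ⟨hc, fun v hvl hvF => (hv v hvl) ⟨hvF, fun hs => hzl (hs ▸ hvl)⟩, hf⟩
        · rintro ⟨hc, hv, hf⟩
          exact ⟨hc, fun v hvl hvF => (hv v hvl) hvF.1, hf⟩
      have h4 : l ∉ (ExcF A (Fv \ {z}) Fe x y) ∩ {l | z ∈ l} := fun hc => hzl hc.2
      rw [Set.indicator_of_notMem h4, add_zero]
      by_cases h2 : l ∈ ExcF A Fv Fe x y
      · rw [Set.indicator_of_mem (h3.mpr h2), Set.indicator_of_mem h2]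
      · rw [Set.indicator_of_notMem (fun hc => h2 (h3.mp hc)),
          Set.indicator_of_notMem h2]
  rw [phiF_eq_tsum A (Fv \ {z}) Fe x y lam, tsum_congr hsplit, ENNReal.tsum_add,
    ← phiF_eq_tsum]
  congr 1
  -- indicator weight functions for the three kinds of pieces
  set IA : List S → ℝ≥0∞ := (ExcF A Fv Fe x z).indicator (wt A lam x z) with hIA
  set IM : List S → ℝ≥0∞ := (ExcF A Fv Fe z z).indicator (wt A lam z z) with hIM
  set IB : List S → ℝ≥0∞ := (ExcF A Fv Fe z y).indicator (wt A lam z y) with hIB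
  set g : List S × List (List S) × List S → ℝ≥0∞ :=
    fun t => IA t.1 * ((t.2.1.map IM).prod * IB t.2.2) with hgdef
  -- memberships from nonvanishing of g
  have gsupp : ∀ t : List S × List (List S) × List S, g t ≠ 0 →
      t.1 ∈ ExcF A Fv Fe x z ∧ (∀ p ∈ t.2.1, p ∈ ExcF A Fv Fe z z) ∧
        t.2.2 ∈ ExcF A Fv Fe z y := by
    intro t ht
    rw [hgdef] at ht
    simp only [mul_ne_zero_iff] at ht
    obtain ⟨h1, h2, h3⟩ := ht
    refine ⟨(Set.indicator_apply_ne_zero.mp h1).1, ?_, (Set.indicator_apply_ne_zero.mp h3).1⟩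
    intro p hp
    by_contra hnp
    exact h2 (List.prod_eq_zero (List.mem_map.mpr ⟨p, hp, Set.indicator_of_notMem hnp _⟩))
  -- the gluing bijection
  have key : ∑' l : List S,
      ((ExcF A (Fv \ {z}) Fe x y) ∩ {l | z ∈ l}).indicator (wt A lam x y) l
        = ∑' t : List S × List (List S) × List S, g t := by
    apply tsum_eq_tsum_of_ne_zero_bij
      (fun t => t.1.1 ++ z :: core z t.1.2.1 t.1.2.2)
    · -- injectivity
      rintro ⟨⟨a₁, m₁, b₁⟩, ht₁⟩ ⟨⟨a₂, m₂, b₂⟩, ht₂⟩ hEq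
      obtain ⟨ma₁, mm₁, mb₁⟩ := gsupp _ ht₁
      obtain ⟨ma₂, mm₂, mb₂⟩ := gsupp _ ht₂
      simp only at hEq ma₁ mm₁ mb₁ ma₂ mm₂ mb₂
      have hza₁ : z ∉ a₁ := fun h => (ma₁.2.1 z h) hz
      have hza₂ : z ∉ a₂ := fun h => (ma₂.2.1 z h) hz
      have hzm₁ : ∀ p ∈ m₁, z ∉ p := fun p hp h => ((mm₁ p hp).2.1 z h) hz
      have hzm₂ : ∀ p ∈ m₂, z ∉ p := fun p hp h => ((mm₂ p hp).2.1 z h) hz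
      have hzb₁ : z ∉ b₁ := fun h => (mb₁.2.1 z h) hz
      have hzb₂ : z ∉ b₂ := fun h => (mb₂.2.1 z h) hz
      obtain ⟨rfl, hcc⟩ := prefix_inj z a₁ a₂ _ _ hza₁ hza₂ hEq
      obtain ⟨rfl, rfl⟩ := core_inj z m₁ m₂ b₁ b₂ hzm₁ hzm₂ hzb₁ hzb₂ hcc
      rfl
    · -- support of LHS is in the range
      intro l hl
      obtain ⟨⟨hlE, hlz⟩, -⟩ := Set.indicator_apply_ne_zero.mp hl
      obtain ⟨a, m, b, hza, hzm, hzb, rfl⟩ := exists_decomp z l hlz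
      obtain ⟨maE, mmE, mbE⟩ := pieces_mem hz hiso hza hzm hzb hlE
      have hg : g (a, m, b) ≠ 0 := by
        rw [hgdef]
        simp only [mul_ne_zero_iff]
        refine ⟨?_, ?_, ?_⟩
        · rw [hIA, Set.indicator_of_mem maE]
          exact wt_ne_zero A lam x z a maE.1
        · intro hzero
          rw [List.prod_eq_zero_iff] at hzero
          obtain ⟨p, hp, hp0⟩ := List.mem_map.mp hzero
          have heq : IM p = wt A lam z z p := Set.indicator_of_mem (mmE p hp) _
          rw [heq] at hp0
          exact wt_ne_zero A lam z z p (mmE p hp).1 hp0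
        · rw [hIB, Set.indicator_of_mem mbE]
          exact wt_ne_zero A lam z y b mbE.1
      exact ⟨⟨(a, m, b), hg⟩, rfl⟩
    · -- the weights agree
      rintro ⟨⟨a, m, b⟩, ht⟩
      obtain ⟨maE, mmE, mbE⟩ := gsupp _ ht
      simp only at maE mmE mbE ⊢
      have hmem : a ++ z :: core z m b ∈ (ExcF A (Fv \ {z}) Fe x y) ∩ {l | z ∈ l} :=
        ⟨glue_mem_E' maE mmE mbE, by simp⟩
      rw [Set.indicator_of_mem hmem, wt_append, wt_core]
      have h1 : IA a = wt A lam x z a := Set.indicator_of_mem maE _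
      have h2 : IB b = wt A lam z y b := Set.indicator_of_mem mbE _
      have h3 : List.map IM m = List.map (wt A lam z z) m :=
        List.map_congr_left (fun p hp => Set.indicator_of_mem (mmE p hp) _)
      rw [hgdef]
      simp only
      rw [h1, h2, h3]
  rw [key]
  -- compute the tsum of g as a product
  have hIAsum : ∑' a : List S, IA a = phiF A Fv Fe x z lam := (phiF_eq_tsum A Fv Fe x z lam).symm
  have hIBsum : ∑' b : List S, IB b = phiF A Fv Fe z y lam := (phiF_eq_tsum A Fv Fe z y lam).symm
  have hIMsum : ∑' l : List S, IM l = phiF A Fv Fe z z lam := (phiF_eq_tsum A Fv Fe z z lam).symm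
  calc ∑' t : List S × List (List S) × List S, g t
      = ∑' a : List S, ∑' p : List (List S) × List S, IA a * ((p.1.map IM).prod * IB p.2) :=
        ENNReal.tsum_prod
          (f := fun (a : List S) (p : List (List S) × List S) => IA a * ((p.1.map IM).prod * IB p.2))
    _ = (∑' a : List S, IA a) *
          ∑' p : List (List S) × List S, (p.1.map IM).prod * IB p.2 := by
        simp only [ENNReal.tsum_mul_left, ENNReal.tsum_mul_right]
    _ = (∑' a : List S, IA a) *
          ((∑' m : List (List S), (m.map IM).prod) * ∑' b : List S, IB b) := by
        rw [ENNReal.tsum_prod (f := fun (m : List (List S)) (b : List S) => (m.map IM).prod * IB b)]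
        simp only [ENNReal.tsum_mul_left, ENNReal.tsum_mul_right]
    _ = phiF A Fv Fe x z lam *
          ((∑' k : ℕ, (phiF A Fv Fe z z lam) ^ k) * phiF A Fv Fe z y lam) := by
        rw [hIAsum, hIBsum, tsum_list_prod, hIMsum]
    _ = ∑' k : ℕ, phiF A Fv Fe x z lam * (phiF A Fv Fe z z lam) ^ k * phiF A Fv Fe z y lam := by
        simp only [mul_assoc, ENNReal.tsum_mul_left, ENNReal.tsum_mul_right]
end
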